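/- Let X = [[0,−1,0],[1,0,−1],[0,−1,0]], Y = [[0,−1,0],[−1,0,1],[0,−1,0]], Z = [[2,0,−2],[0,0,0],[2,0,−2]], and define the linear functional F on M₃(ℂ) by F(A) = (1/16)·trace(A·Zᵀ), so that F(X) = F(Y) = 0 and F(Z) = 1. Let L = span_ℂ{X + iY, Z} ⊂ M₃(ℂ). Then: (i) L is an abelian complex Lie subalgebra of M₃(ℂ), i.e. [W₁, W₂] = 0 for all W₁, W₂ ∈ L (in particular F vanishes on all brackets of elements of L); and (ii) the positivity condition holds: for every W ∈ L, the number i·F([W, W̄]) is a nonnegative real number, where W̄ denotes the entrywise complex conjugate of W. (Thus L is a positive polarization at the functional F = Z*.) -/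

import Mathlib

open Matrix

noncomputable section

def Xm : Matrix (Fin 3) (Fin 3) ℂ := !![0, -1, 0; 1, 0, -1; 0, -1, 0]

def Ym : Matrix (Fin 3) (Fin 3) ℂ := !![0, -1, 0; -1, 0, 1; 0, -1, 0]

def Zm : Matrix (Fin 3) (Fin 3) ℂ := !![2, 0, -2; 0, 0, 0; 2, 0, -2]

/-- The linear functional `F(A) = (1/16)·trace(A·Zᵀ)`, i.e. the functional `Z*`. -/
def Ffun (A : Matrix (Fin 3) (Fin 3) ℂ) : ℂ := (1 / 16 : ℂ) * (A * Zmᵀ).trace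

/-- The polarization `L = span_ℂ{X + iY, Z}`. -/
def Lpol : Submodule ℂ (Matrix (Fin 3) (Fin 3) ℂ) :=
  Submodule.span ℂ {Xm + Complex.I • Ym, Zm}

/-- `V = X + iY`. -/
def Vm : Matrix (Fin 3) (Fin 3) ℂ := Xm + Complex.I • Ym

/-- `V̄ = X - iY`. -/
def Vb : Matrix (Fin 3) (Fin 3) ℂ := Xm - Complex.I • Ym

lemma hVZ : Vm * Zm = 0 := by
  ext i j
  fin_cases i <;> fin_cases j <;>
    (simp [Vm, Xm, Ym, Zm, Matrix.mul_apply, Fin.sum_univ_three, Matrix.vecHead,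
      Matrix.vecTail]; try ring)

lemma hZV : Zm * Vm = 0 := by
  ext i j
  fin_cases i <;> fin_cases j <;>
    (simp [Vm, Xm, Ym, Zm, Matrix.mul_apply, Fin.sum_univ_three, Matrix.vecHead,
      Matrix.vecTail]; try ring)

lemma hVbZ : Vb * Zm = 0 := by
  ext i j
  fin_cases i <;> fin_cases j <;>
    (simp [Vb, Xm, Ym, Zm, Matrix.mul_apply, Fin.sum_univ_three, Matrix.vecHead,
      Matrix.vecTail]; try ring)

lemma hZVb : Zm * Vb = 0 := by
  ext i j
  fin_cases i <;> fin_cases j <;>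
    (simp [Vb, Xm, Ym, Zm, Matrix.mul_apply, Fin.sum_univ_three, Matrix.vecHead,
      Matrix.vecTail]; try ring)

lemma hZZ : Zm * Zm = 0 := by
  ext i j
  fin_cases i <;> fin_cases j <;>
    simp [Zm, Matrix.mul_apply, Fin.sum_univ_three, Matrix.vecHead, Matrix.vecTail]

lemma hE : Vm * Vb - Vb * Vm = (-2 * Complex.I) • Zm := by
  ext i j
  fin_cases i <;> fin_cases j <;>
    simp [Vm, Vb, Xm, Ym, Zm, Matrix.mul_apply, Fin.sum_univ_three, Matrix.vecHead,
      Matrix.vecTail] <;>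
    (first
      | linear_combination (2 * Complex.I) * Complex.I_sq
      | linear_combination (-2 * Complex.I) * Complex.I_sq
      | linear_combination (4 : ℂ) * Complex.I_sq
      | linear_combination (-4 : ℂ) * Complex.I_sq
      | ring)

lemma hFX : Ffun Xm = 0 := by
  simp [Ffun, Xm, Zm, Matrix.trace_fin_three, Matrix.mul_apply, Matrix.transpose_apply,
    Fin.sum_univ_three, Matrix.vecHead, Matrix.vecTail]
  simp [Matrix.vecMul, dotProduct, Fin.sum_univ_three, Matrix.vecHead, Matrix.vecTail]

lemma hFY : Ffun Ym = 0 := by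
  simp [Ffun, Ym, Zm, Matrix.trace_fin_three, Matrix.mul_apply, Matrix.transpose_apply,
    Fin.sum_univ_three, Matrix.vecHead, Matrix.vecTail]
  simp [Matrix.vecMul, dotProduct, Fin.sum_univ_three, Matrix.vecHead, Matrix.vecTail]

lemma hFZ : Ffun Zm = 1 := by
  simp [Ffun, Zm, Matrix.trace_fin_three, Matrix.mul_apply, Matrix.transpose_apply,
    Fin.sum_univ_three, Matrix.vecHead, Matrix.vecTail]
  norm_num [Matrix.vecMul, dotProduct, Fin.sum_univ_three, Matrix.vecHead, Matrix.vecTail,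
    Matrix.cons_val_zero, Matrix.cons_val_one, Matrix.cons_val_two]

lemma Ffun_smul (c : ℂ) (A : Matrix (Fin 3) (Fin 3) ℂ) : Ffun (c • A) = c * Ffun A := by
  simp [Ffun, Matrix.smul_mul, Matrix.trace_smul, smul_eq_mul]
  ring

lemma conj_map (a b : ℂ) :
    (a • Vm + b • Zm).map (starRingEnd ℂ) =
      (starRingEnd ℂ a) • Vb + (starRingEnd ℂ b) • Zm := by
  ext i j
  fin_cases i <;> fin_cases j <;>
    (simp [Vm, Vb, Xm, Ym, Zm, Matrix.map_apply, Matrix.vecHead, Matrix.vecTail,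
      map_add, _root_.map_mul, map_ofNat, Complex.conj_I, mul_comm];
     try first | ring1 | exact Or.inl (by ring))

/-- `F(X) = F(Y) = 0`, `F(Z) = 1`; `L` is an abelian complex Lie subalgebra (so `F`
vanishes on brackets of elements of `L`), and for every `W ∈ L` the number
`i·F([W, W̄])` is a nonnegative real: `L` is a positive polarization at `F = Z*`. -/
theorem positive_polarization_at_Zstar :
    Ffun Xm = 0 ∧ Ffun Ym = 0 ∧ Ffun Zm = 1 ∧
    (∀ W₁ ∈ Lpol, ∀ W₂ ∈ Lpol, W₁ * W₂ - W₂ * W₁ = 0) ∧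
    (∀ W ∈ Lpol,
      ∃ r : ℝ, 0 ≤ r ∧
        Complex.I * Ffun (W * W.map (starRingEnd ℂ) - W.map (starRingEnd ℂ) * W) = (r : ℂ)) := by
  have hspan : ∀ W ∈ Lpol, ∃ a b : ℂ, W = a • Vm + b • Zm := by
    intro W hW
    rw [Lpol, Submodule.mem_span_pair] at hW
    obtain ⟨a, b, h⟩ := hW
    exact ⟨a, b, h.symm⟩
  refine ⟨hFX, hFY, hFZ, ?_, ?_⟩
  · intro W₁ h₁ W₂ h₂
    obtain ⟨a₁, b₁, rfl⟩ := hspan W₁ h₁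
    obtain ⟨a₂, b₂, rfl⟩ := hspan W₂ h₂
    simp only [mul_add, add_mul, smul_mul_assoc, mul_smul_comm, hVZ, hZV, hZZ,
      smul_zero, smul_smul]
    module
  · intro W hW
    obtain ⟨a, b, rfl⟩ := hspan W hW
    refine ⟨2 * Complex.normSq a, by have := Complex.normSq_nonneg a; linarith, ?_⟩
    rw [conj_map]
    have key : (a • Vm + b • Zm) * ((starRingEnd ℂ a) • Vb + (starRingEnd ℂ b) • Zm) -
        ((starRingEnd ℂ a) • Vb + (starRingEnd ℂ b) • Zm) * (a • Vm + b • Zm) =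
        (a * starRingEnd ℂ a) • (Vm * Vb - Vb * Vm) := by
      simp only [mul_add, add_mul, smul_mul_assoc, mul_smul_comm, hVZ, hZV, hVbZ, hZVb,
        hZZ, smul_zero, smul_smul, smul_sub]
      module
    rw [key, hE, smul_smul, Ffun_smul, hFZ, Complex.mul_conj]
    push_cast
    linear_combination (-2 * (Complex.normSq a : ℂ)) * Complex.I_sq
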